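/- Let M be a real 3×3 matrix with det M ≠ 0, and let μ₁ ≥ μ₂ ≥ μ₃ > 0 be the eigenvalues of Mᵗ·M. Then for every choice of signs s₁, s₂, s₃ ∈ {+1, −1} whose product s₁·s₂·s₃ equals the sign of det M, there exists R₀ ∈ SO(3) such that R₀·M is symmetric and Tr(R₀·M) = s₁√μ₁ + s₂√μ₂ + s₃√μ₃. -/

import Mathlib

open Matrix Polynomial

section aux
variable {n : Type*} [Fintype n] [DecidableEq n] {R : Type*} [CommRing R]

lemma my_charpoly_diagonal (d : n → R) :
    (Matrix.diagonal d).charpoly = ∏ i, (X - C (d i)) := by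
  have h : charmatrix (Matrix.diagonal d) = Matrix.diagonal fun i => (X : R[X]) - C (d i) := by
    ext i j
    by_cases h : i = j
    · subst h; simp
    · simp [charmatrix_apply_ne _ _ _ h, Matrix.diagonal_apply_ne _ h,
        Matrix.diagonal_apply_ne d h]
  rw [Matrix.charpoly, h, Matrix.det_diagonal]

lemma my_charpoly_conj (P A Q : Matrix n n R) (hPQ : P * Q = 1) :
    (P * A * Q).charpoly = A.charpoly := by
  have hc : charmatrix (P * A * Q) =
      P.map C * charmatrix A * Q.map C := by
    have hsc : ∀ B : Matrix n n R[X], B * Matrix.scalar n (X : R[X]) =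
        Matrix.scalar n (X : R[X]) * B := fun B =>
      ((Matrix.scalar_commute (X : R[X]) (fun r => Commute.all _ _) B)).symm
    have hPQ' : P.map (C : R →+* R[X]) * Q.map C = 1 := by
      rw [← Matrix.map_mul, hPQ]; simp
    unfold charmatrix
    simp only [RingHom.mapMatrix_apply, mul_sub, sub_mul]
    rw [mul_assoc (P.map C) (Matrix.scalar n X) (Q.map C), ← hsc, ← mul_assoc, hPQ', one_mul]
    congr 1
    simp [Matrix.map_mul, mul_assoc]
  rw [Matrix.charpoly, Matrix.charpoly, hc, Matrix.det_mul, Matrix.det_mul]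
  have this : (P.map (C : R →+* R[X])).det * (Q.map C).det = 1 := by
    rw [← Matrix.det_mul, ← Matrix.map_mul, hPQ]; simp
  rw [mul_right_comm, this, one_mul]

end aux

lemma my_two {α : Type*} [DecidableEq α] (b c y z : α) (h : ({b, c} : Multiset α) = {y, z}) :
    (b = y ∧ c = z) ∨ (b = z ∧ c = y) := by
  have hb : b = y ∨ b = z := by
    have : b ∈ ({y, z} : Multiset α) := h ▸ Multiset.mem_cons_self b {c}
    simpa using this
  rcases hb with hb | hb
  · left
    subst hb
    refine ⟨rfl, ?_⟩
    have := (Multiset.cons_inj_right b).mp h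
    simpa using this
  · right
    subst hb
    refine ⟨rfl, ?_⟩
    rw [show ({y, b} : Multiset α) = {b, y} from Multiset.cons_swap y b {}] at h
    have := (Multiset.cons_inj_right b).mp h
    simpa using this

lemma my_three (a x : Fin 3 → ℝ)
    (h : ({a 0, a 1, a 2} : Multiset ℝ) = {x 0, x 1, x 2}) :
    ∃ σ : Equiv.Perm (Fin 3), ∀ i, a i = x (σ i) := by
  have h0 : a 0 = x 0 ∨ a 0 = x 1 ∨ a 0 = x 2 := by
    have : a 0 ∈ ({x 0, x 1, x 2} : Multiset ℝ) := h ▸ Multiset.mem_cons_self _ _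
    simpa using this
  rcases h0 with h0 | h0 | h0
  · rw [h0] at h
    have h' := (Multiset.cons_inj_right (x 0)).mp h
    rcases my_two _ _ _ _ h' with ⟨h1, h2⟩ | ⟨h1, h2⟩
    · exact ⟨1, by intro i; fin_cases i <;> assumption⟩
    · exact ⟨Equiv.swap 1 2, by intro i; fin_cases i <;> simpa [Equiv.swap_apply_def]⟩
  · rw [h0] at h
    rw [show ({x 0, x 1, x 2} : Multiset ℝ) = {x 1, x 0, x 2} from Multiset.cons_swap _ _ _] at h
    have h' := (Multiset.cons_inj_right (x 1)).mp h
    rcases my_two _ _ _ _ h' with ⟨h1, h2⟩ | ⟨h1, h2⟩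
    · exact ⟨Equiv.swap 0 1, by intro i; fin_cases i <;> simpa [Equiv.swap_apply_def]⟩
    · exact ⟨⟨![1, 2, 0], ![2, 0, 1], by decide, by decide⟩, by
        intro i; fin_cases i <;> simpa⟩
  · rw [h0] at h
    rw [show ({x 0, x 1, x 2} : Multiset ℝ) = {x 2, x 0, x 1} from ?_] at h
    · have h' := (Multiset.cons_inj_right (x 2)).mp h
      rcases my_two _ _ _ _ h' with ⟨h1, h2⟩ | ⟨h1, h2⟩
      · exact ⟨⟨![2, 0, 1], ![1, 2, 0], by decide, by decide⟩, by
          intro i; fin_cases i <;> simpa⟩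
      · exact ⟨Equiv.swap 0 2, by intro i; fin_cases i <;> simpa [Equiv.swap_apply_def]⟩
    · rw [show ({x 0, x 1, x 2} : Multiset ℝ) = x 0 ::ₘ {x 1, x 2} from rfl,
        show ({x 1, x 2} : Multiset ℝ) = {x 2, x 1} from Multiset.cons_swap _ _ _]
      exact Multiset.cons_swap _ _ _

lemma my_roots_three (a b c : ℝ) :
    ((X - C a) * (X - C b) * (X - C c)).roots = {a, b, c} := by
  rw [Polynomial.roots_mul (by
      apply mul_ne_zero <;> first
        | exact X_sub_C_ne_zero _
        | apply mul_ne_zero <;> exact X_sub_C_ne_zero _),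
    Polynomial.roots_mul (mul_ne_zero (X_sub_C_ne_zero a) (X_sub_C_ne_zero b)),
    roots_X_sub_C, roots_X_sub_C, roots_X_sub_C]
  rfl

/-- Every admissible sign combination is realized by a critical point of τ_M. -/
theorem critical_values_realized (M : Matrix (Fin 3) (Fin 3) ℝ) (hM : M.det ≠ 0)
    (μ₁ μ₂ μ₃ : ℝ) (hμ : μ₁ ≥ μ₂ ∧ μ₂ ≥ μ₃ ∧ μ₃ > 0)
    (hchar : (Mᵀ * M).charpoly = (X - C μ₁) * (X - C μ₂) * (X - C μ₃))
    (s₁ s₂ s₃ : ℝ) (hs₁ : s₁ = 1 ∨ s₁ = -1) (hs₂ : s₂ = 1 ∨ s₂ = -1)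
    (hs₃ : s₃ = 1 ∨ s₃ = -1) (hsprod : s₁ * s₂ * s₃ = Real.sign M.det) :
    ∃ R₀ : Matrix (Fin 3) (Fin 3) ℝ, R₀ᵀ * R₀ = 1 ∧ R₀.det = 1 ∧
      (R₀ * M)ᵀ = R₀ * M ∧
      Matrix.trace (R₀ * M) =
        s₁ * Real.sqrt μ₁ + s₂ * Real.sqrt μ₂ + s₃ * Real.sqrt μ₃ := by
  obtain ⟨hμ12, hμ23, hμ3⟩ := hμ
  have hA : (Mᵀ * M).IsHermitian := by
    simpa [Matrix.conjTranspose_eq_transpose_of_trivial] using Matrix.isHermitian_conjTranspose_mul_self M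
  set U : Matrix (Fin 3) (Fin 3) ℝ := (hA.eigenvectorUnitary : Matrix (Fin 3) (Fin 3) ℝ) with hU_def
  set d : Fin 3 → ℝ := hA.eigenvalues with hd_def
  -- spectral theorem over ℝ
  have hspec : Mᵀ * M = U * Matrix.diagonal d * Uᵀ := by
    have h := hA.spectral_theorem
    simp only [Unitary.conjStarAlgAut_apply, Unitary.coe_star] at h
    have h1 : (RCLike.ofReal : ℝ → ℝ) ∘ hA.eigenvalues = d := by funext i; simp [hd_def]
    have hstar : star U = Uᵀ := by ext i j; simp [Matrix.conjTranspose_apply]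
    rw [h1, hstar] at h
    exact h
  have hUU : Uᵀ * U = 1 := by
    have hU' := (hA.eigenvectorUnitary).2
    rw [Matrix.mem_unitaryGroup_iff'] at hU'
    have hstar : star U = Uᵀ := by ext i j; simp [Matrix.conjTranspose_apply]
    rwa [hstar] at hU'
  have hUU' : U * Uᵀ = 1 := by
    have hU' := (hA.eigenvectorUnitary).2
    rw [Matrix.mem_unitaryGroup_iff] at hU'
    have hstar : star U = Uᵀ := by ext i j; simp [Matrix.conjTranspose_apply]
    rwa [hstar] at hU'
  -- eigenvalue multiset equals {μ₁, μ₂, μ₃}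
  have hcp : (Matrix.diagonal d).charpoly = (X - C μ₁) * (X - C μ₂) * (X - C μ₃) := by
    rw [← hchar, hspec, my_charpoly_conj U (Matrix.diagonal d) Uᵀ hUU']
  rw [my_charpoly_diagonal, Fin.prod_univ_three] at hcp
  have hmult : ({d 0, d 1, d 2} : Multiset ℝ) = {μ₁, μ₂, μ₃} := by
    have := congrArg Polynomial.roots hcp
    rwa [my_roots_three, my_roots_three] at this
  set m : Fin 3 → ℝ := ![μ₁, μ₂, μ₃] with hm_def
  set s : Fin 3 → ℝ := ![s₁, s₂, s₃] with hs_def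
  obtain ⟨σ, hσ⟩ := my_three d m (by simpa [hm_def] using hmult)
  have hm_pos : ∀ j, 0 < m j := by
    intro j; fin_cases j <;> simp [hm_def] <;> linarith
  have hd_pos : ∀ i, 0 < d i := fun i => hσ i ▸ hm_pos (σ i)
  have hs_sq : ∀ j, s j * s j = 1 := by
    intro j; fin_cases j <;> simp [hs_def] <;>
      first
        | (rcases hs₁ with h | h <;> rw [h] <;> norm_num)
        | (rcases hs₂ with h | h <;> rw [h] <;> norm_num)
        | (rcases hs₃ with h | h <;> rw [h] <;> norm_num)
  -- the symmetric square root with signs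
  set D : Matrix (Fin 3) (Fin 3) ℝ :=
    Matrix.diagonal (fun i => s (σ i) * Real.sqrt (d i)) with hD_def
  set S : Matrix (Fin 3) (Fin 3) ℝ := U * D * Uᵀ with hS_def
  have hSsymm : Sᵀ = S := by
    rw [hS_def, Matrix.transpose_mul, Matrix.transpose_mul, Matrix.transpose_transpose,
      Matrix.diagonal_transpose, mul_assoc]
  have hSS : S * S = Mᵀ * M := by
    rw [hS_def, hspec]
    have : U * D * Uᵀ * (U * D * Uᵀ) = U * (D * (Uᵀ * U) * D) * Uᵀ := by
      simp only [mul_assoc]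
    rw [this, hUU, mul_one, Matrix.diagonal_mul_diagonal]
    rw [show (fun i => s (σ i) * Real.sqrt (d i) * (s (σ i) * Real.sqrt (d i))) = d from
      funext fun i => by
        rw [show s (σ i) * Real.sqrt (d i) * (s (σ i) * Real.sqrt (d i))
            = (s (σ i) * s (σ i)) * (Real.sqrt (d i) * Real.sqrt (d i)) by ring,
          hs_sq, Real.mul_self_sqrt (hd_pos i).le, one_mul]]
  have hdetU : U.det * U.det = 1 := by
    have := congrArg Matrix.det hUU
    rwa [Matrix.det_mul, Matrix.det_transpose, Matrix.det_one] at this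
  have hdetS : S.det = s₁ * s₂ * s₃ * (Real.sqrt μ₁ * Real.sqrt μ₂ * Real.sqrt μ₃) := by
    rw [hS_def, Matrix.det_mul, Matrix.det_mul, Matrix.det_transpose, mul_comm U.det,
      mul_assoc, hdetU, mul_one, hD_def, Matrix.det_diagonal]
    rw [show (∏ i, s (σ i) * Real.sqrt (d i)) = ∏ j, s j * Real.sqrt (m j) from
      Fintype.prod_equiv σ _ _ (fun i => by rw [hσ i])]
    rw [Fin.prod_univ_three]
    simp [hs_def, hm_def]
    ring
  have htrS : S.trace = s₁ * Real.sqrt μ₁ + s₂ * Real.sqrt μ₂ + s₃ * Real.sqrt μ₃ := by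
    rw [hS_def, Matrix.trace_mul_cycle, hUU, one_mul, hD_def, Matrix.trace_diagonal]
    rw [show (∑ i, s (σ i) * Real.sqrt (d i)) = ∑ j, s j * Real.sqrt (m j) from
      Fintype.sum_equiv σ _ _ (fun i => by rw [hσ i])]
    rw [Fin.sum_univ_three]
    simp [hs_def, hm_def]
  -- product of eigenvalues is det M squared
  have hprod_d : (∏ i, d i) = μ₁ * μ₂ * μ₃ := by
    rw [show (∏ i, d i) = ∏ j, m j from Fintype.prod_equiv σ _ _ (fun i => by rw [hσ i]),
      Fin.prod_univ_three]
    simp [hm_def]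
  have hdetMM : μ₁ * μ₂ * μ₃ = M.det * M.det := by
    have h := congrArg Matrix.det hspec
    rw [Matrix.det_mul, Matrix.det_mul, Matrix.det_mul, Matrix.det_transpose,
      Matrix.det_transpose, Matrix.det_diagonal, hprod_d] at h
    have h2 : U.det * (μ₁ * μ₂ * μ₃) * U.det = μ₁ * μ₂ * μ₃ * (U.det * U.det) := by ring
    rw [h2, hdetU, mul_one] at h
    exact h.symm
  have hsqrt_prod : Real.sqrt μ₁ * Real.sqrt μ₂ * Real.sqrt μ₃ = |M.det| := by
    rw [← Real.sqrt_mul (by linarith : (0:ℝ) ≤ μ₁),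
      ← Real.sqrt_mul (mul_nonneg (by linarith) (by linarith)), hdetMM,
      ← abs_mul_abs_self M.det, Real.sqrt_mul_self (abs_nonneg _)]
  have hMunit : IsUnit M.det := isUnit_iff_ne_zero.mpr hM
  refine ⟨S * M⁻¹, ?_, ?_, ?_, ?_⟩
  · rw [Matrix.transpose_mul, hSsymm, Matrix.transpose_nonsing_inv]
    have : Mᵀ⁻¹ * S * (S * M⁻¹) = Mᵀ⁻¹ * (S * S) * M⁻¹ := by simp only [mul_assoc]
    rw [this, hSS]
    have : Mᵀ⁻¹ * (Mᵀ * M) * M⁻¹ = (Mᵀ⁻¹ * Mᵀ) * (M * M⁻¹) := by simp only [mul_assoc]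
    rw [this, Matrix.nonsing_inv_mul _ (by simpa [Matrix.det_transpose] using hMunit),
      Matrix.mul_nonsing_inv _ hMunit, one_mul]
  · rw [Matrix.det_mul, hdetS, Matrix.det_nonsing_inv, hsprod, hsqrt_prod]
    have hsign : Real.sign M.det * |M.det| = M.det := by
      rcases lt_or_gt_of_ne hM with h | h
      · rw [Real.sign_of_neg h, abs_of_neg h]; ring
      · rw [Real.sign_of_pos h, abs_of_pos h]; ring
    rw [hsign, Ring.inverse_eq_inv']
    exact mul_inv_cancel₀ hM
  · rw [mul_assoc, Matrix.nonsing_inv_mul _ hMunit, mul_one, hSsymm]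
  · rw [mul_assoc, Matrix.nonsing_inv_mul _ hMunit, mul_one, htrS]
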